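/- Let T be a finite tree such that the general corona T∘𝒫 has at least three vertices, for a vertex neighborhood partition 𝒫 of T. Then the set Ext(T∘𝒫) of external vertices is the unique dominating 2-packing of T∘𝒫 containing all leaves of T∘𝒫. -/

import Mathlib

open SimpleGraph

namespace GenCorona

universe u

/-- A vertex neighborhood partition of a graph `G`: for every vertex `v`, a partition
of the open neighborhood `N_G(v)` into nonempty sets. -/
structure NbhdPartition {V : Type u} (G : SimpleGraph V) where
  part : V → Set (Set V)
  nonempty : ∀ v : V, ∀ A ∈ part v, A.Nonempty
  subset_nbhd : ∀ v : V, ∀ A ∈ part v, A ⊆ G.neighborSet v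
  covers : ∀ v : V, ∀ u ∈ G.neighborSet v, ∃ A ∈ part v, u ∈ A
  eq_of_inter : ∀ v : V, ∀ A ∈ part v, ∀ B ∈ part v, (A ∩ B).Nonempty → A = B

variable {V : Type u}

/-- The vertex type of the general corona `G ∘ 𝒫`: external vertices `(v,1)` are encoded
as `Sum.inl v`, internal vertices `(v,A)` (with `A ∈ 𝒫(v)`) as `Sum.inr ⟨(v,A), _⟩`. -/
abbrev CoronaVert (G : SimpleGraph V) (P : NbhdPartition G) : Type u :=
  V ⊕ {p : V × Set V // p.2 ∈ P.part p.1}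

/-- The general corona `G ∘ 𝒫`. -/
def corona (G : SimpleGraph V) (P : NbhdPartition G) : SimpleGraph (CoronaVert G P) :=
  SimpleGraph.fromRel fun x y =>
    match x, y with
    | Sum.inl v, Sum.inr p => v = p.val.1
    | Sum.inr p, Sum.inr q =>
        G.Adj p.val.1 q.val.1 ∧ q.val.1 ∈ p.val.2 ∧ p.val.1 ∈ q.val.2
    | _, _ => False

/-- The set of external vertices of the general corona. -/
def Ext (G : SimpleGraph V) (P : NbhdPartition G) : Set (CoronaVert G P) :=
  Set.range Sum.inl

/-- A graph is a general corona of a tree if it is isomorphic to `T ∘ 𝒫` for some finite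
tree `T` and some vertex neighborhood partition `𝒫` of `T`. -/
def IsGeneralCoronaOfTree {W : Type*} (H : SimpleGraph W) : Prop :=
  ∃ (n : ℕ) (T : SimpleGraph (Fin n)) (P : NbhdPartition T),
    T.IsTree ∧ Nonempty (H ≃g corona T P)

/-- A graph `H` is a general corona of a tree with external vertex set `E`. -/
def IsGenCoronaWithExt {W : Type*} (H : SimpleGraph W) (E : Set W) : Prop :=
  ∃ (n : ℕ) (T : SimpleGraph (Fin n)) (P : NbhdPartition T),
    T.IsTree ∧ ∃ f : H ≃g corona T P, E = ⇑f ⁻¹' Ext T P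

/-- `D` is a dominating set of `G`. -/
def IsDominating (G : SimpleGraph V) (D : Set V) : Prop :=
  ∀ v ∉ D, ∃ u ∈ D, G.Adj v u

/-- `S` is a 2-packing of `G`: any two distinct vertices of `S` are at distance
greater than 2 (where the extended distance of unreachable vertices is `⊤`). -/
def Is2Packing (G : SimpleGraph V) (S : Set V) : Prop :=
  ∀ u ∈ S, ∀ v ∈ S, u ≠ v → 2 < G.edist u v

/-- A leaf is a vertex of degree 1, i.e. with exactly one neighbor. -/
def IsLeaf (G : SimpleGraph V) (v : V) : Prop :=
  (G.neighborSet v).ncard = 1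

/-- The domination number: the minimum size of a dominating set. -/
noncomputable def dominationNumber (G : SimpleGraph V) : ℕ :=
  sInf {n : ℕ | ∃ D : Set V, IsDominating G D ∧ D.ncard = n}

/-- The graph obtained from `G` by subdividing every edge in `F` (each once):
for each `e ∈ F` a new vertex `Sum.inr e` replaces the edge `e` by a path of length two. -/
def subdivide (G : SimpleGraph V) (F : Set (Sym2 V)) : SimpleGraph (V ⊕ F) :=
  SimpleGraph.fromRel fun x y =>
    match x, y with
    | Sum.inl u, Sum.inl v => G.Adj u v ∧ s(u, v) ∉ F
    | Sum.inl u, Sum.inr e => u ∈ e.val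
    | _, _ => False

/-- The domination subdivision number `sd(G)`: the minimum number of edges which must be
subdivided (each edge at most once) in order to increase the domination number. -/
noncomputable def sd (G : SimpleGraph V) : ℕ :=
  sInf {k : ℕ | ∃ F : Set (Sym2 V), F ⊆ G.edgeSet ∧ F.ncard = k ∧
    dominationNumber G < dominationNumber (subdivide G F)}

/-- The corona `G ∘ K₁`: attach one new pendant vertex `Sum.inr v` to each vertex
`Sum.inl v` of `G`. -/
def coronaK1 (G : SimpleGraph V) : SimpleGraph (V ⊕ V) :=
  SimpleGraph.fromRel fun x y =>
    match x, y with
    | Sum.inl u, Sum.inl w => G.Adj u w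
    | Sum.inl u, Sum.inr w => u = w
    | _, _ => False

/-- The 2-subdivision `S₂(G)`: every edge `uv` is replaced by a path `(u, x₁, x₂, v)`;
the new vertex `Sum.inr ⟨(u,v), _⟩` is the subdivision vertex adjacent to `u`. -/
def twoSubdivision (G : SimpleGraph V) : SimpleGraph (V ⊕ {p : V × V // G.Adj p.1 p.2}) :=
  SimpleGraph.fromRel fun x y =>
    match x, y with
    | Sum.inl u, Sum.inr p => u = p.val.1
    | Sum.inr p, Sum.inr q => p.val.1 = q.val.2 ∧ p.val.2 = q.val.1
    | _, _ => False

/-- `𝒫'` is a refinement of `𝒫`. -/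
def Refines {G : SimpleGraph V} (P' P : NbhdPartition G) : Prop :=
  ∀ v : V, ∀ A ∈ P'.part v, ∃ B ∈ P.part v, A ⊆ B

/-- The graph obtained by contracting the two vertices `x` and `y` of `G` to the single
vertex `x` (the vertex `y` is removed, and `x` becomes adjacent to all former
neighbors of `y`). -/
def contractPair {W : Type*} (G : SimpleGraph W) (x y : W) :
    SimpleGraph {w : W // w ≠ y} :=
  SimpleGraph.fromRel fun a b =>
    G.Adj a.val b.val ∨ (a.val = x ∧ G.Adj y b.val) ∨ (b.val = x ∧ G.Adj a.val y)

/-- The graph obtained from `G` by attaching a path `(x, y, z)` (encoded as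
`Sum.inr 0, Sum.inr 1, Sum.inr 2`) to the vertex `v` via the edge `v x`. -/
def attachPath3 {W : Type*} (G : SimpleGraph W) (v : W) : SimpleGraph (W ⊕ Fin 3) :=
  SimpleGraph.fromRel fun a b =>
    match a, b with
    | Sum.inl u, Sum.inl w => G.Adj u w
    | Sum.inl u, Sum.inr i => u = v ∧ i = 0
    | Sum.inr i, Sum.inr j => (i = 0 ∧ j = 1) ∨ (i = 1 ∧ j = 2)
    | _, _ => False

/-- The graph obtained from `G` by attaching a path `(x, y)` (encoded as
`Sum.inr 0, Sum.inr 1`) to the vertex `v` via the edge `v x`. -/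
def attachPath2 {W : Type*} (G : SimpleGraph W) (v : W) : SimpleGraph (W ⊕ Fin 2) :=
  SimpleGraph.fromRel fun a b =>
    match a, b with
    | Sum.inl u, Sum.inl w => G.Adj u w
    | Sum.inl u, Sum.inr i => u = v ∧ i = 0
    | Sum.inr i, Sum.inr j => i = 0 ∧ j = 1
    | _, _ => False

/-- The family `𝓕` of labeled trees; the label of a vertex is `A` when it belongs to the
distinguished set `L`, and `B` otherwise.  The family contains the labeled path `P₄`
(leaves labeled `A`, support vertices labeled `B`) and is closed under the two
attachment operations. -/
inductive LabF : ∀ {W : Type}, SimpleGraph W → Set W → Prop where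
  | base : LabF (SimpleGraph.pathGraph 4) ({0, 3} : Set (Fin 4))
  | opA {W : Type} {G : SimpleGraph W} {L : Set W} (v : W) :
      LabF G L → v ∈ L →
        LabF (attachPath3 G v) (Sum.inl '' L ∪ {Sum.inr (2 : Fin 3)})
  | opB {W : Type} {G : SimpleGraph W} {L : Set W} (v : W) :
      LabF G L → v ∉ L →
        LabF (attachPath2 G v) (Sum.inl '' L ∪ {Sum.inr (1 : Fin 2)})

/-- A tree `T` belongs to the family `𝓕` if it admits a labeling constructed by the
above rules, i.e. it is isomorphic to a member of the inductively generated family. -/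
def MemF {W : Type*} (T : SimpleGraph W) : Prop :=
  ∃ (W' : Type) (G : SimpleGraph W') (L : Set W'), LabF G L ∧ Nonempty (T ≃g G)


section Aux

variable {V : Type u} {G : SimpleGraph V} {P : NbhdPartition G}

lemma corona_adj_inl_inl {u v : V} : ¬ (corona G P).Adj (Sum.inl u) (Sum.inl v) :=
  fun h => h.2.elim id id

lemma corona_adj_inl_inr {v : V} {p : {p : V × Set V // p.2 ∈ P.part p.1}} :
    (corona G P).Adj (Sum.inl v) (Sum.inr p) ↔ v = p.val.1 := by
  constructor
  · rintro ⟨-, h | h⟩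
    · exact h
    · exact (h : False).elim
  · intro h
    exact ⟨fun hc => by simp at hc, Or.inl h⟩

lemma corona_adj_inr_inr {p q : {p : V × Set V // p.2 ∈ P.part p.1}} :
    (corona G P).Adj (Sum.inr p) (Sum.inr q) ↔
      G.Adj p.val.1 q.val.1 ∧ q.val.1 ∈ p.val.2 ∧ p.val.1 ∈ q.val.2 := by
  constructor
  · rintro ⟨-, h | h⟩
    · exact h
    · obtain ⟨ha, h1, h2⟩ := (h : G.Adj q.val.1 p.val.1 ∧ p.val.1 ∈ q.val.2 ∧ q.val.1 ∈ p.val.2)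
      exact ⟨ha.symm, h2, h1⟩
  · rintro ⟨h1, h2, h3⟩
    refine ⟨fun hc => ?_, Or.inl ⟨h1, h2, h3⟩⟩
    have hpq : p = q := by injection hc
    exact h1.ne (by rw [hpq])

lemma walk_short {W : Type*} {H : SimpleGraph W} :
    ∀ {x y : W} (p : H.Walk x y), p.length ≤ 2 →
      x = y ∨ H.Adj x y ∨ ∃ z, H.Adj x z ∧ H.Adj z y := by
  intro x y p hp
  cases p with
  | nil => exact Or.inl rfl
  | cons h q =>
    cases q with
    | nil => exact Or.inr (Or.inl h)
    | cons h' q' =>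
      cases q' with
      | nil => exact Or.inr (Or.inr ⟨_, h, h'⟩)
      | cons h'' q'' =>
        simp only [SimpleGraph.Walk.length_cons] at hp
        omega

lemma two_lt_edist {W : Type*} {H : SimpleGraph W} {x y : W} (hxy : x ≠ y)
    (hadj : ¬ H.Adj x y) (hmid : ∀ z, H.Adj x z → H.Adj z y → False) :
    2 < H.edist x y := by
  by_contra hc
  push_neg at hc
  have hne : H.edist x y ≠ ⊤ := by
    intro ht
    rw [ht] at hc
    exact absurd (top_le_iff.mp hc) (by simp)
  obtain ⟨p, hp⟩ := SimpleGraph.exists_walk_of_edist_ne_top hne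
  rw [← hp] at hc
  have hlen : p.length ≤ 2 := by exact_mod_cast hc
  rcases walk_short p hlen with h | h | ⟨z, h1, h2⟩
  · exact hxy h
  · exact hadj h
  · exact hmid z h1 h2

/-- In an acyclic graph, if `cons h' p'` is a path starting `a, c, ...` and `x ≠ c` is a
neighbour of `a`, then `x` does not lie on `p'`. -/
lemma acyclic_adj_mem_support {W : Type u} {H : SimpleGraph W} (hH : H.IsAcyclic)
    {a c b x : W} (h' : H.Adj a c) (p' : H.Walk c b) (hp : (SimpleGraph.Walk.cons h' p').IsPath)
    (hax : H.Adj a x) (hx : x ∈ p'.support) : x = c := by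
  classical
  by_contra hne
  rw [SimpleGraph.Walk.cons_isPath_iff] at hp
  obtain ⟨hp1, hp2⟩ := hp
  have hq1 : (SimpleGraph.Walk.cons h' (p'.takeUntil x hx)).IsPath :=
    (hp1.takeUntil hx).cons (fun ha => hp2 (SimpleGraph.Walk.support_takeUntil_subset _ _ ha))
  have hq2 : (SimpleGraph.Walk.cons hax SimpleGraph.Walk.nil).IsPath := by
    simp [SimpleGraph.Walk.cons_isPath_iff, hax.ne]
  have hequ := hH.path_unique ⟨_, hq1⟩ ⟨_, hq2⟩
  have hsup := congrArg (fun q : H.Path a x => q.val.support) hequ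
  simp only [SimpleGraph.Walk.support_cons, SimpleGraph.Walk.support_nil, List.cons.injEq,
    true_and] at hsup
  have hce := SimpleGraph.Walk.support_eq_cons (p'.takeUntil x hx)
  rw [hsup] at hce
  simp only [List.cons.injEq] at hce
  exact hne hce.1

lemma no_chain {W : Type u} [Fintype W] {H : SimpleGraph W} (hH : H.IsAcyclic)
    (f : ℕ → W) (hadj : ∀ n, H.Adj (f n) (f (n + 1))) (hnb : ∀ n, f (n + 2) ≠ f n) :
    False := by
  have key : ∀ n, ∃ q : H.Walk (f n) (f 0), q.IsPath ∧ q.length = n ∧ f (n + 1) ∉ q.support := by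
    intro n
    induction n with
    | zero =>
      refine ⟨SimpleGraph.Walk.nil, by simp, rfl, ?_⟩
      simp only [SimpleGraph.Walk.support_nil, List.mem_singleton]
      exact (hadj 0).ne'
    | succ n ih =>
      obtain ⟨q, hq, hlen, hns⟩ := ih
      refine ⟨SimpleGraph.Walk.cons (hadj n).symm q, hq.cons hns, by simp [hlen], ?_⟩
      simp only [SimpleGraph.Walk.support_cons, List.mem_cons]
      rintro (h1 | h2)
      · exact (hadj (n + 1)).ne h1.symm
      · exact hnb n (acyclic_adj_mem_support hH (hadj n).symm q (hq.cons hns) (hadj (n + 1)) h2)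
  obtain ⟨q, hq, hlen, -⟩ := key (Fintype.card W)
  have := hq.length_lt
  omega

end Aux

/-- If the general corona `T ∘ 𝒫` of a finite tree `T` has at least three
vertices, then its set of external vertices is the unique dominating 2-packing of
`T ∘ 𝒫` containing all leaves of `T ∘ 𝒫`. -/
theorem ext_unique_dominating_packing {V : Type u} [Fintype V]
    (T : SimpleGraph V) (hT : T.IsTree) (P : NbhdPartition T)
    (h3 : 3 ≤ Nat.card (CoronaVert T P)) :
    (IsDominating (corona T P) (Ext T P) ∧ Is2Packing (corona T P) (Ext T P) ∧
        ∀ x : CoronaVert T P, IsLeaf (corona T P) x → x ∈ Ext T P) ∧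
      ∀ S : Set (CoronaVert T P),
        IsDominating (corona T P) S → Is2Packing (corona T P) S →
          (∀ x : CoronaVert T P, IsLeaf (corona T P) x → x ∈ S) → S = Ext T P := by
  classical
  have hdomE : IsDominating (corona T P) (Ext T P) := by
    rintro (v | p) hv
    · exact absurd ⟨v, rfl⟩ hv
    · exact ⟨Sum.inl p.val.1, ⟨p.val.1, rfl⟩, (corona_adj_inl_inr.mpr rfl).symm⟩
  have hpackE : Is2Packing (corona T P) (Ext T P) := by
    rintro x ⟨u, rfl⟩ y ⟨v, rfl⟩ hne
    refine two_lt_edist hne corona_adj_inl_inl ?_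
    rintro (w | q) h1 h2
    · exact corona_adj_inl_inl h1
    · have e1 := corona_adj_inl_inr.mp h1
      have e2 := corona_adj_inl_inr.mp h2.symm
      exact hne (by rw [e1.trans e2.symm])
  have hleafE : ∀ x : CoronaVert T P, IsLeaf (corona T P) x → x ∈ Ext T P := by
    rintro (v | p) hl
    · exact ⟨v, rfl⟩
    · exfalso
      obtain ⟨a, ha⟩ := Set.ncard_eq_one.mp hl
      obtain ⟨⟨v, A⟩, hA⟩ := p
      obtain ⟨u, hu⟩ := P.nonempty v A hA
      have hTadj : T.Adj v u := P.subset_nbhd v A hA hu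
      obtain ⟨B, hB, hvB⟩ := P.covers u v ((T.mem_neighborSet u v).mpr hTadj.symm)
      have m1 : (Sum.inl v : CoronaVert T P) ∈
          (corona T P).neighborSet (Sum.inr ⟨(v, A), hA⟩) :=
        ((corona T P).mem_neighborSet _ _).mpr (corona_adj_inl_inr.mpr rfl).symm
      have m2 : (Sum.inr ⟨(u, B), hB⟩ : CoronaVert T P) ∈
          (corona T P).neighborSet (Sum.inr ⟨(v, A), hA⟩) :=
        ((corona T P).mem_neighborSet _ _).mpr (corona_adj_inr_inr.mpr ⟨hTadj, hu, hvB⟩)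
      rw [ha, Set.mem_singleton_iff] at m1 m2
      exact Sum.inl_ne_inr (m1.trans m2.symm)
  refine ⟨⟨hdomE, hpackE, hleafE⟩, ?_⟩
  intro S hSdom hSpack _
  have hpack1 : ∀ {x y : CoronaVert T P}, x ∈ S → y ∈ S → (corona T P).Adj x y → False := by
    intro x y hx hy hadj
    have h1 := hSpack x hx y hy hadj.ne
    have h2 : (corona T P).edist x y ≤ 1 := by
      simpa using SimpleGraph.edist_le (SimpleGraph.Walk.cons hadj SimpleGraph.Walk.nil)
    have := h1.trans_le h2
    norm_num at this
  have hpack2 : ∀ {x y z : CoronaVert T P}, x ∈ S → z ∈ S → x ≠ z →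
      (corona T P).Adj x y → (corona T P).Adj y z → False := by
    intro x y z hx hz hxz h1 h2
    have hlt := hSpack x hx z hz hxz
    have hle : (corona T P).edist x z ≤ 2 := by
      simpa using SimpleGraph.edist_le
        (SimpleGraph.Walk.cons h1 (SimpleGraph.Walk.cons h2 SimpleGraph.Walk.nil))
    exact absurd (hlt.trans_le hle) (lt_irrefl _)
  have stepA : ∀ v : V, Sum.inl v ∉ S →
      ∃ A, ∃ h : A ∈ P.part v, (Sum.inr ⟨(v, A), h⟩ : CoronaVert T P) ∈ S := by
    intro v hv
    obtain ⟨s, hsS, hadj⟩ := hSdom _ hv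
    obtain (w | ⟨⟨w, A⟩, hA⟩) := s
    · exact absurd hadj corona_adj_inl_inl
    · have hvw := corona_adj_inl_inr.mp hadj
      cases hvw
      exact ⟨A, hA, hsS⟩
  have hmem : ∀ (v : V) (A : Set V) (h : A ∈ P.part v),
      (Sum.inr ⟨(v, A), h⟩ : CoronaVert T P) ∈ S → ∀ u ∈ A, Sum.inl u ∉ S := by
    intro v A h hS u huA huS
    have hTadj : T.Adj v u := P.subset_nbhd v A h huA
    obtain ⟨B, hB, hvB⟩ := P.covers u v ((T.mem_neighborSet u v).mpr hTadj.symm)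
    exact hpack2 huS hS (by simp) (corona_adj_inl_inr.mpr rfl)
      ((corona_adj_inr_inr (p := ⟨(u, B), hB⟩) (q := ⟨(v, A), h⟩)).mpr ⟨hTadj.symm, hvB, huA⟩)
  have hnb : ∀ (v : V) (A : Set V) (h1 : A ∈ P.part v),
      (Sum.inr ⟨(v, A), h1⟩ : CoronaVert T P) ∈ S → ∀ u ∈ A, ∀ (B : Set V)
      (h2 : B ∈ P.part u), (Sum.inr ⟨(u, B), h2⟩ : CoronaVert T P) ∈ S → v ∉ B := by
    intro v A h1 hS1 u huA B h2 hS2 hvB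
    have hTadj : T.Adj v u := P.subset_nbhd v A h1 huA
    exact hpack1 hS1 hS2 (corona_adj_inr_inr.mpr ⟨hTadj, huA, hvB⟩)
  have hD : ∀ v : V, Sum.inl v ∈ S := by
    by_contra hc
    push_neg at hc
    obtain ⟨v0, hv0⟩ := hc
    have hstep : ∀ p : V × Set V, ∃ q : V × Set V,
        (∃ h : p.2 ∈ P.part p.1, (Sum.inr ⟨p, h⟩ : CoronaVert T P) ∈ S) →
        (∃ h : q.2 ∈ P.part q.1, (Sum.inr ⟨q, h⟩ : CoronaVert T P) ∈ S) ∧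
          q.1 ∈ p.2 ∧ T.Adj p.1 q.1 ∧ p.1 ∉ q.2 := by
      rintro ⟨v, A⟩
      by_cases hp : ∃ h : A ∈ P.part v, (Sum.inr ⟨(v, A), h⟩ : CoronaVert T P) ∈ S
      · obtain ⟨h, hS⟩ := hp
        obtain ⟨u, hu⟩ := P.nonempty v A h
        obtain ⟨B, hB, hSB⟩ := stepA u (hmem v A h hS u hu)
        exact ⟨(u, B), fun _ =>
          ⟨⟨hB, hSB⟩, hu, P.subset_nbhd v A h hu, hnb v A h hS u hu B hB hSB⟩⟩
      · exact ⟨(v, A), fun h => absurd h hp⟩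
    choose step hstepp using hstep
    obtain ⟨A0, hA0, hS0⟩ := stepA v0 hv0
    set g : ℕ → V × Set V := fun n => step^[n] (v0, A0) with hg
    have hgs : ∀ n, g (n + 1) = step (g n) := fun n =>
      Function.iterate_succ_apply' step n (v0, A0)
    have hinv : ∀ n, ∃ h : (g n).2 ∈ P.part (g n).1,
        (Sum.inr ⟨g n, h⟩ : CoronaVert T P) ∈ S := by
      intro n
      induction n with
      | zero => exact ⟨hA0, hS0⟩
      | succ n ih =>
        rw [hgs n]
        exact (hstepp (g n) ih).1
    have hadjf : ∀ n, T.Adj ((g n).1) ((g (n + 1)).1) := by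
      intro n
      rw [hgs n]
      exact (hstepp (g n) (hinv n)).2.2.1
    have hnbf : ∀ n, (g (n + 2)).1 ≠ (g n).1 := by
      intro n heq
      have h1 := (hstepp (g n) (hinv n)).2.2.2
      have h2 := (hstepp (g (n + 1)) (hinv (n + 1))).2.1
      rw [← hgs n] at h1
      rw [← hgs (n + 1)] at h2
      rw [heq] at h2
      exact h1 h2
    exact no_chain hT.IsAcyclic (fun n => (g n).1) hadjf hnbf
  ext x
  constructor
  · intro hx
    obtain (v | p) := x
    · exact ⟨v, rfl⟩
    · exact (hpack1 hx (hD p.val.1) (corona_adj_inl_inr.mpr rfl).symm).elim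
  · rintro ⟨v, rfl⟩
    exact hD v


end GenCorona
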